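/- Let n ≥ 2 and let p be an odd prime. Let u, v, w be integers with 0 ≤ u, v ≤ n−1, u+v = 2w−1, and 1 ≤ w ≤ n−1. Then ν_p(C(n−1,u)·C(n−1,v)) ≥ ν_p(2w) + (2−(2n−2w))/(p−1) and ν_p(C(n−1,u)·C(n−1,v)) ≥ ν_p(2n−2w) + (2−2w)/(p−1), where ν_p is the p-adic valuation. -/

import Mathlib

open Nat Finset

private lemma bern (p j : ℕ) (hp : 1 ≤ p) : 1 + j * (p - 1) ≤ p ^ j := by
  obtain ⟨q, rfl⟩ : ∃ q, p = q + 1 := ⟨p - 1, by omega⟩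
  simp only [Nat.add_sub_cancel]
  induction j with
  | zero => simp
  | succ j ih =>
    have h1 : 1 ≤ (q+1) ^ j := Nat.one_le_pow _ _ (by omega)
    rw [pow_succ]
    nlinarith [ih, h1]

private lemma core (p : ℕ) (hp : p.Prime) (hodd : Odd p) (m u v w k : ℕ)
    (hu : u ≤ m) (hv : v ≤ m) (huv : u + v + 1 = 2*w) (hm : m + 1 = w + k)
    (hk1 : 1 ≤ k) :
    (padicValNat p (m.choose u * m.choose v) : ℚ)
      ≥ (padicValNat p (2*w) : ℚ) - (2*(k:ℚ) - 2)/((p:ℚ)-1) := by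
  haveI : Fact p.Prime := ⟨hp⟩
  have hp1 : 1 < p := hp.one_lt
  have hw1 : 1 ≤ w := by omega
  set t := padicValNat p (2*w) with ht
  set j := Nat.log p (2*k - 1) with hj
  set b := max (Nat.log p m) t + 1 with hb
  have hmb : Nat.log p m < b := by omega
  -- Kummer
  have hku := padicValNat_choose (p := p) (n := m) (k := u) (b := b) hu hmb
  have hkv := padicValNat_choose (p := p) (n := m) (k := v) (b := b) hv hmb
  set Su := (Finset.Ico 1 b).filter fun i => p ^ i ≤ u % p ^ i + (m - u) % p ^ i with hSu
  set Sv := (Finset.Ico 1 b).filter fun i => p ^ i ≤ v % p ^ i + (m - v) % p ^ i with hSv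
  -- subset claim
  have hsub : Finset.Ico (j+1) (t+1) ⊆ Su ∪ Sv := by
    intro i hi
    simp only [Finset.mem_Ico] at hi
    obtain ⟨hij, hit⟩ := hi
    set q := p ^ i with hq
    have hq1 : 1 < q := Nat.one_lt_pow (by omega) hp1
    -- p^i ≥ 2k
    have hq2k : 2*k ≤ q := by
      by_contra hcon
      have : q ≤ 2*k - 1 := by omega
      have : i ≤ j := (Nat.le_log_iff_pow_le hp1 (by omega)).mpr this
      omega
    -- p^i ∣ 2w
    have hdvd2w : q ∣ 2*w := dvd_trans (pow_dvd_pow p (by omega)) pow_padicValNat_dvd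
    -- p^i ∣ w since p odd
    have hdvdw : q ∣ w := by
      have hcop : Nat.Coprime q 2 := Nat.Coprime.pow_left _ (by
        rw [hp.coprime_iff_not_dvd]
        intro h2
        have := (Nat.prime_dvd_prime_iff_eq hp Nat.prime_two).mp h2
        subst this
        exact (by decide : ¬ Odd 2) hodd)
      exact hcop.dvd_of_dvd_mul_left hdvd2w
    -- u%q + v%q = q - 1
    have huvmod : u % q + v % q = q - 1 := by
      have h1 : (u + v) % q = q - 1 := by
        obtain ⟨c, hc⟩ := hdvd2w
        have hc1 : 1 ≤ c := by
          rcases Nat.eq_zero_or_pos c with rfl | h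
          · simp at hc; omega
          · exact h
        have e1 : (c-1)*q = c*q - 1*q := by rw [Nat.sub_mul]
        have e2 : q * c = c * q := mul_comm _ _
        have e3 : q ≤ c * q := Nat.le_mul_of_pos_left q (by omega)
        have e4 : u + v = (q-1) + (c-1)*q := by omega
        rw [e4, Nat.add_mul_mod_self_right, Nat.mod_eq_of_lt (by omega)]
      have h2 : (u % q + v % q) % q = q - 1 := by rw [Nat.add_mod] at h1; exact h1
      have h3 : u % q < q := Nat.mod_lt _ (by omega)
      have h4 : v % q < q := Nat.mod_lt _ (by omega)
      rcases Nat.lt_or_ge (u % q + v % q) q with h | h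
      · rwa [Nat.mod_eq_of_lt h] at h2
      · have h5 : u % q + v % q - q < q := by omega
        have := Nat.mod_eq_sub_mod h
        rw [this, Nat.mod_eq_of_lt h5] at h2
        omega
    -- m % q ≤ k - 1
    have hmmod : m % q ≤ k - 1 := by
      obtain ⟨c, hc⟩ := hdvdw
      have e2 : q * c = c * q := mul_comm _ _
      have h5 : m = (k - 1) + c * q := by omega
      rw [h5, Nat.add_mul_mod_self_right]
      exact Nat.mod_le _ _
    -- now case analysis
    by_contra hcon
    simp only [Finset.mem_union, hSu, hSv, Finset.mem_filter, Finset.mem_Ico, not_or, not_and,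
      not_le] at hcon
    have hib : 1 ≤ i ∧ i < b := by constructor <;> omega
    have hcu : u % q + (m - u) % q < q := hcon.1 hib
    have hcv : v % q + (m - v) % q < q := hcon.2 hib
    -- u % q ≤ m % q
    have key : ∀ x, x ≤ m → x % q + (m - x) % q < q → x % q ≤ m % q := by
      intro x hx hlt
      have h1 : (x % q + (m - x) % q) % q = m % q := by
        rw [← Nat.add_mod, Nat.add_sub_cancel' hx]
      rw [Nat.mod_eq_of_lt hlt] at h1
      omega
    have h1 := key u hu hcu
    have h2 := key v hv hcv
    omega
  -- counting
  have hcard : t ≤ Su.card + Sv.card + j := by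
    have h1 : (Finset.Ico (j+1) (t+1)).card ≤ (Su ∪ Sv).card := Finset.card_le_card hsub
    have h2 : (Su ∪ Sv).card ≤ Su.card + Sv.card := Finset.card_union_le _ _
    rw [Nat.card_Ico] at h1
    omega
  -- j * (p-1) ≤ 2k - 2
  have hjbound : j * (p - 1) ≤ 2*k - 2 := by
    rcases Nat.eq_zero_or_pos j with h0 | h0
    · simp [h0]
    · have h1 : p ^ j ≤ 2*k - 1 := Nat.pow_log_le_self p (by omega)
      have h2 := bern p j (by omega)
      omega
  -- assemble over ℚ
  have hne1 : m.choose u ≠ 0 := (Nat.choose_pos hu).ne'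
  have hne2 : m.choose v ≠ 0 := (Nat.choose_pos hv).ne' 
  rw [padicValNat.mul hne1 hne2, hku, hkv]
  have hp3 : 3 ≤ p := by
    rcases Nat.lt_or_ge p 3 with h | h
    · interval_cases p <;> first | exact absurd hp (by decide) | exact absurd hodd (by decide)
    · exact h
  have hpQ : (2:ℚ) ≤ (p:ℚ) - 1 := by
    have := (Nat.cast_le (α := ℚ)).mpr hp3
    push_cast at this ⊢
    linarith
  have hjQ : (j:ℚ) ≤ (2*(k:ℚ) - 2)/((p:ℚ)-1) := by
    rw [le_div_iff₀ (by linarith)]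
    have hc := (Nat.cast_le (α := ℚ)).mpr hjbound
    push_cast [Nat.cast_sub (by omega : 1 ≤ p), Nat.cast_sub (by omega : 2 ≤ 2*k)] at hc
    linarith
  have hcQ : (t:ℚ) ≤ (Su.card : ℚ) + (Sv.card : ℚ) + (j:ℚ) := by
    have := (Nat.cast_le (α := ℚ)).mpr hcard
    push_cast at this
    linarith
  push_cast
  linarith

theorem binom_valuation_odd (n : ℕ) (hn : 2 ≤ n) (p : ℕ) (hp : p.Prime) (hodd : Odd p)
    (u v w : ℕ) (hu : u ≤ n-1) (hv : v ≤ n-1) (huv : u + v = 2*w - 1)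
    (hw1 : 1 ≤ w) (hw : w ≤ n-1) :
    (padicValNat p ((n-1).choose u * (n-1).choose v) : ℚ)
        ≥ (padicValNat p (2*w) : ℚ) + (2 - (2*(n : ℚ) - 2*(w : ℚ))) / ((p : ℚ) - 1)
    ∧ (padicValNat p ((n-1).choose u * (n-1).choose v) : ℚ)
        ≥ (padicValNat p (2*n - 2*w) : ℚ) + (2 - 2*(w : ℚ)) / ((p : ℚ) - 1) := by
  set m := n - 1 with hm
  set k := n - w with hk
  have hk1 : 1 ≤ k := by omega
  have huv' : u + v + 1 = 2*w := by omega
  have hmk : m + 1 = w + k := by omega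
  have hkQ : (k:ℚ) = (n:ℚ) - (w:ℚ) := by
    rw [hk, Nat.cast_sub (by omega)]
  constructor
  · have h := core p hp hodd m u v w k hu hv huv' hmk hk1
    rw [hkQ] at h
    calc (padicValNat p (m.choose u * m.choose v) : ℚ)
        ≥ (padicValNat p (2*w) : ℚ) - (2*((n:ℚ)-(w:ℚ)) - 2)/((p:ℚ)-1) := h
      _ = (padicValNat p (2*w) : ℚ) + (2 - (2*(n : ℚ) - 2*(w : ℚ))) / ((p : ℚ) - 1) := by
          ring
  · have huv2 : (m - u) + (m - v) + 1 = 2*k := by omega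
    have hmk2 : m + 1 = k + w := by omega
    have h := core p hp hodd m (m-u) (m-v) k w (by omega) (by omega) huv2 hmk2 hw1
    rw [Nat.choose_symm hu, Nat.choose_symm hv] at h
    have h2 : 2*n - 2*w = 2*k := by omega
    rw [h2]
    calc (padicValNat p (m.choose u * m.choose v) : ℚ)
        ≥ (padicValNat p (2*k) : ℚ) - (2*(w:ℚ) - 2)/((p:ℚ)-1) := h
      _ = (padicValNat p (2*k) : ℚ) + (2 - 2*(w:ℚ)) / ((p : ℚ) - 1) := by ring
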